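/- Let A be a positive definite Hermitian n×n complex matrix, and let P₁ and P₂ be n×n orthogonal projection matrices (Hermitian idempotents) with P₁·P₂ = 0, and set P = P₁ + P₂. Then ‖P·A·P‖ ≤ 2·max(‖P₁·A·P₁‖, ‖P₂·A·P₂‖). -/

import Mathlib

open Matrix
open scoped ComplexOrder

set_option maxHeartbeats 1000000

/-- The operator (spectral) norm of a matrix, i.e. the norm of the induced operator
between Euclidean spaces. -/
noncomputable def matNorm {m n : Type*} [Fintype m] [Fintype n] [DecidableEq n]
    (M : Matrix m n ℂ) : ℝ :=
  ‖LinearMap.toContinuousLinearMap (Matrix.toEuclideanLin M)‖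

lemma matNorm_eq_clm {n : ℕ} (M : Matrix (Fin n) (Fin n) ℂ) :
    matNorm M = ‖Matrix.toEuclideanCLM (𝕜 := ℂ) (n := Fin n) M‖ := rfl

lemma posSemidef_toCLM_nonneg {n : ℕ} {M : Matrix (Fin n) (Fin n) ℂ} (hM : M.PosSemidef) :
    0 ≤ Matrix.toEuclideanCLM (𝕜 := ℂ) (n := Fin n) M := by
  rw [ContinuousLinearMap.nonneg_iff_isPositive]
  exact (LinearMap.isPositive_toContinuousLinearMap_iff _).mpr (Matrix.isPositive_toEuclideanLin_iff.mpr hM)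


lemma conj_sum_id {R : Type*} [Ring R] (T Q₁ Q₂ : R) :
    (Q₁ + Q₂) * T * (Q₁ + Q₂) + (Q₁ - Q₂) * T * (Q₁ - Q₂)
      = (Q₁ * T * Q₁ + Q₂ * T * Q₂) + (Q₁ * T * Q₁ + Q₂ * T * Q₂) := by noncomm_ring

lemma op_bound {H : Type*} [NormedAddCommGroup H] [InnerProductSpace ℂ H] [CompleteSpace H]
    (T Q₁ Q₂ : H →L[ℂ] H) (hTpos : 0 ≤ T)
    (hQ₁s : IsSelfAdjoint Q₁) (hQ₁i : Q₁ * Q₁ = Q₁)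
    (hQ₂s : IsSelfAdjoint Q₂) (hQ₂i : Q₂ * Q₂ = Q₂)
    (hQ₁₂ : Q₁ * Q₂ = 0) (hQ₂₁ : Q₂ * Q₁ = 0) (c : ℝ) (hc0 : 0 ≤ c)
    (hc1 : ‖Q₁ * T * Q₁‖ ≤ c) (hc2 : ‖Q₂ * T * Q₂‖ ≤ c) :
    ‖(Q₁ + Q₂) * T * (Q₁ + Q₂)‖ ≤ 2 * c := by
  have hM1pos : (0 : H →L[ℂ] H) ≤ Q₁ * T * Q₁ := by
    have := star_left_conjugate_nonneg hTpos Q₁; rwa [hQ₁s.star_eq] at this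
  have hM2pos : (0 : H →L[ℂ] H) ≤ Q₂ * T * Q₂ := by
    have := star_left_conjugate_nonneg hTpos Q₂; rwa [hQ₂s.star_eq] at this
  have hMpos : (0 : H →L[ℂ] H) ≤ (Q₁ + Q₂) * T * (Q₁ + Q₂) := by
    have := star_left_conjugate_nonneg hTpos (Q₁ + Q₂); rwa [(hQ₁s.add hQ₂s).star_eq] at this
  have hNpos : (0 : H →L[ℂ] H) ≤ (Q₁ - Q₂) * T * (Q₁ - Q₂) := by
    have := star_left_conjugate_nonneg hTpos (Q₁ - Q₂); rwa [(hQ₁s.sub hQ₂s).star_eq] at this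
  have halg_nonneg : ∀ r : ℝ, 0 ≤ r → (0 : H →L[ℂ] H) ≤ algebraMap ℝ (H →L[ℂ] H) r := by
    intro r hr
    have hcast : algebraMap ℝ (H →L[ℂ] H) r = algebraMap ℂ _ (r : ℂ) := by
      rw [IsScalarTower.algebraMap_apply ℝ ℂ]; norm_num
    have h0 := star_mul_self_nonneg (algebraMap ℂ (H →L[ℂ] H) ((Real.sqrt r : ℝ) : ℂ))
    rw [← algebraMap_star_comm, Complex.star_def, Complex.conj_ofReal, ← _root_.map_mul,
      ← Complex.ofReal_mul, Real.mul_self_sqrt hr] at h0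
    rwa [hcast]
  have halg_mono : ∀ r s : ℝ, r ≤ s →
      algebraMap ℝ (H →L[ℂ] H) r ≤ algebraMap ℝ (H →L[ℂ] H) s := by
    intro r s hrs
    have h0 := halg_nonneg (s - r) (by linarith)
    rw [← sub_nonneg, ← _root_.map_sub]
    exact h0
  have key : ∀ Q : H →L[ℂ] H, IsSelfAdjoint Q → Q * Q = Q → (0 : H →L[ℂ] H) ≤ Q * T * Q →
      ‖Q * T * Q‖ ≤ c → Q * T * Q ≤ algebraMap ℝ (H →L[ℂ] H) c * Q := by
    intro Q hQs hQi hpos hle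
    have hsa : IsSelfAdjoint (Q * T * Q) := IsSelfAdjoint.of_nonneg hpos
    have h1 : Q * T * Q ≤ algebraMap ℝ (H →L[ℂ] H) ‖Q * T * Q‖ :=
      IsSelfAdjoint.le_algebraMap_norm_self hsa
    have h2 : Q * T * Q ≤ algebraMap ℝ (H →L[ℂ] H) c := h1.trans (halg_mono _ _ hle)
    have h3 := star_left_conjugate_le_conjugate h2 Q
    rw [hQs.star_eq] at h3
    calc Q * T * Q = Q * (Q * T * Q) * Q := by
          rw [show Q * (Q * T * Q) * Q = (Q * Q) * T * (Q * Q) from by noncomm_ring, hQi]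
      _ ≤ Q * algebraMap ℝ (H →L[ℂ] H) c * Q := h3
      _ = algebraMap ℝ (H →L[ℂ] H) c * Q := by
          rw [← Algebra.commutes c Q, mul_assoc, hQi]
  have hb1 : Q₁ * T * Q₁ ≤ algebraMap ℝ (H →L[ℂ] H) c * Q₁ :=
    key Q₁ hQ₁s hQ₁i hM1pos hc1
  have hb2 : Q₂ * T * Q₂ ≤ algebraMap ℝ (H →L[ℂ] H) c * Q₂ :=
    key Q₂ hQ₂s hQ₂i hM2pos hc2
  have hsum : Q₁ * T * Q₁ + Q₂ * T * Q₂ ≤ algebraMap ℝ (H →L[ℂ] H) c * (Q₁ + Q₂) := by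
    rw [mul_add]; exact add_le_add hb1 hb2
  have hM_le : (Q₁ + Q₂) * T * (Q₁ + Q₂) ≤
      (Q₁ * T * Q₁ + Q₂ * T * Q₂) + (Q₁ * T * Q₁ + Q₂ * T * Q₂) := by
    calc (Q₁ + Q₂) * T * (Q₁ + Q₂)
        ≤ (Q₁ + Q₂) * T * (Q₁ + Q₂) + (Q₁ - Q₂) * T * (Q₁ - Q₂) :=
          le_add_of_nonneg_right hNpos
      _ = _ := conj_sum_id T Q₁ Q₂
  have hfinal : (Q₁ + Q₂) * T * (Q₁ + Q₂) ≤
      (algebraMap ℝ (H →L[ℂ] H) c + algebraMap ℝ (H →L[ℂ] H) c) * (Q₁ + Q₂) := by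
    have heq : algebraMap ℝ (H →L[ℂ] H) c * (Q₁ + Q₂) + algebraMap ℝ (H →L[ℂ] H) c * (Q₁ + Q₂)
        = (algebraMap ℝ (H →L[ℂ] H) c + algebraMap ℝ (H →L[ℂ] H) c) * (Q₁ + Q₂) :=
      (add_mul _ _ _).symm
    exact (hM_le.trans (add_le_add hsum hsum)).trans_eq heq
  have hnorm_le : ‖(Q₁ + Q₂) * T * (Q₁ + Q₂)‖ ≤
      ‖(algebraMap ℝ (H →L[ℂ] H) c + algebraMap ℝ (H →L[ℂ] H) c) * (Q₁ + Q₂)‖ :=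
    CStarAlgebra.norm_le_norm_of_nonneg_of_le hMpos hfinal
  have hQidem : (Q₁ + Q₂) * (Q₁ + Q₂) = Q₁ + Q₂ := by
    rw [add_mul, mul_add, mul_add, hQ₁i, hQ₂i, hQ₁₂, hQ₂₁, add_zero, zero_add]
  have hQnorm : ‖Q₁ + Q₂‖ ≤ 1 := by
    have h0 : ‖Q₁ + Q₂‖ * ‖Q₁ + Q₂‖ = ‖Q₁ + Q₂‖ := by
      rw [← CStarRing.norm_star_mul_self (x := Q₁ + Q₂), (hQ₁s.add hQ₂s).star_eq, hQidem]
    nlinarith [norm_nonneg (Q₁ + Q₂)]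
  have halgnorm : ‖algebraMap ℝ (H →L[ℂ] H) c + algebraMap ℝ (H →L[ℂ] H) c‖ ≤ 2 * c := by
    rw [← _root_.map_add, Algebra.algebraMap_eq_smul_one, norm_smul]
    have h1 : ‖(1 : H →L[ℂ] H)‖ ≤ 1 := ContinuousLinearMap.norm_id_le
    have h2 : ‖(c + c : ℝ)‖ = 2 * c := by
      rw [Real.norm_eq_abs, abs_of_nonneg (by linarith)]; ring
    rw [h2]
    nlinarith [norm_nonneg (1 : H →L[ℂ] H)]
  calc ‖(Q₁ + Q₂) * T * (Q₁ + Q₂)‖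
      ≤ ‖(algebraMap ℝ (H →L[ℂ] H) c + algebraMap ℝ (H →L[ℂ] H) c) * (Q₁ + Q₂)‖ := hnorm_le
    _ ≤ ‖algebraMap ℝ (H →L[ℂ] H) c + algebraMap ℝ (H →L[ℂ] H) c‖ * ‖Q₁ + Q₂‖ := norm_mul_le _ _
    _ ≤ (2 * c) * 1 := mul_le_mul halgnorm hQnorm (norm_nonneg _) (by linarith)
    _ = 2 * c := by ring


theorem stmt13 {n : ℕ} (A P₁ P₂ : Matrix (Fin n) (Fin n) ℂ) (hA : A.PosDef)
    (h₁s : P₁ᴴ = P₁) (h₁i : P₁ * P₁ = P₁) (h₂s : P₂ᴴ = P₂) (h₂i : P₂ * P₂ = P₂)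
    (h₁₂ : P₁ * P₂ = 0) :
    matNorm ((P₁ + P₂) * A * (P₁ + P₂)) ≤
      2 * max (matNorm (P₁ * A * P₁)) (matNorm (P₂ * A * P₂)) := by
  have h₂₁ : P₂ * P₁ = 0 := by
    have := congrArg conjTranspose h₁₂
    simpa [Matrix.conjTranspose_mul, h₁s, h₂s] using this
  have hQ₁s : IsSelfAdjoint (Matrix.toEuclideanCLM (𝕜 := ℂ) (n := Fin n) P₁) := by
    show star _ = _; rw [← map_star]; exact congrArg _ h₁s
  have hQ₂s : IsSelfAdjoint (Matrix.toEuclideanCLM (𝕜 := ℂ) (n := Fin n) P₂) := by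
    show star _ = _; rw [← map_star]; exact congrArg _ h₂s
  have hQ₁i := congrArg (Matrix.toEuclideanCLM (𝕜 := ℂ) (n := Fin n)) h₁i
  have hQ₂i := congrArg (Matrix.toEuclideanCLM (𝕜 := ℂ) (n := Fin n)) h₂i
  have hQ₁₂ := congrArg (Matrix.toEuclideanCLM (𝕜 := ℂ) (n := Fin n)) h₁₂
  have hQ₂₁ := congrArg (Matrix.toEuclideanCLM (𝕜 := ℂ) (n := Fin n)) h₂₁
  rw [_root_.map_mul] at hQ₁i hQ₂i hQ₁₂ hQ₂₁
  rw [_root_.map_zero] at hQ₁₂ hQ₂₁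
  have hTpos : (0 : EuclideanSpace ℂ (Fin n) →L[ℂ] EuclideanSpace ℂ (Fin n)) ≤
      Matrix.toEuclideanCLM (𝕜 := ℂ) (n := Fin n) A := posSemidef_toCLM_nonneg hA.posSemidef
  rw [matNorm_eq_clm, matNorm_eq_clm, matNorm_eq_clm, _root_.map_mul, _root_.map_mul,
    _root_.map_mul, _root_.map_mul, _root_.map_mul, _root_.map_mul, _root_.map_add]
  exact op_bound _ _ _ hTpos hQ₁s hQ₁i hQ₂s hQ₂i hQ₁₂ hQ₂₁ _
    (le_trans (norm_nonneg _) (le_max_left _ _)) (le_max_left _ _) (le_max_right _ _)
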